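/- Let n, m be finite index types, H a real m × n matrix, P a positive semidefinite real n × n matrix, and R a positive definite real m × m matrix. Then trace(P − P·Hᵀ·(H·P·Hᵀ + R)⁻¹·H·P) ≤ trace(P). -/

import Mathlib

open Matrix

lemma psd_trace_nonneg {n : Type*} [Fintype n] [DecidableEq n] {A : Matrix n n ℝ}
    (hA : A.PosSemidef) : 0 ≤ A.trace := by
  apply Finset.sum_nonneg
  intro i _
  exact hA.diag_nonneg

theorem stmt11 {n m : Type*} [Fintype n] [Fintype m] [DecidableEq m]
    (H : Matrix m n ℝ) (P : Matrix n n ℝ) (R : Matrix m m ℝ)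
    (hP : P.PosSemidef) (hR : R.PosDef) :
    (P - P * Hᵀ * (H * P * Hᵀ + R)⁻¹ * H * P).trace ≤ P.trace := by
  classical
  have hPH : (H * P * Hᵀ).PosSemidef := by
    have := hP.mul_mul_conjTranspose_same H
    simpa [conjTranspose_eq_transpose_of_trivial, Matrix.mul_assoc] using this
  have hS : (H * P * Hᵀ + R).PosDef := Matrix.PosDef.posSemidef_add hPH hR
  have hSinv : ((H * P * Hᵀ + R)⁻¹).PosSemidef := (Matrix.posDef_inv_iff.mpr hS).posSemidef
  have hK : (P * Hᵀ * (H * P * Hᵀ + R)⁻¹ * H * P).PosSemidef := by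
    have := hSinv.conjTranspose_mul_mul_same (H * P)
    have hPt : Pᵀ = P := (conjTranspose_eq_transpose_of_trivial P) ▸ hP.isHermitian.eq
    have heq : (H * P)ᴴ = P * Hᵀ := by
      rw [conjTranspose_eq_transpose_of_trivial, transpose_mul, hPt]
    rw [heq] at this
    simpa [Matrix.mul_assoc] using this
  have := psd_trace_nonneg hK
  rw [trace_sub]
  linarith
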